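/- Let X be symmetric positive definite, τ ∈ [0,1), and M symmetric with (1−τ)X⁻¹ ⪯ M ⪯ (1+τ)X⁻¹. Then for all vectors u, v: |[(vᵀX⁻¹v)(uᵀX⁻¹u) − (vᵀX⁻¹u)²] − [(vᵀMv)(uᵀMu) − (vᵀMu)²]| ≤ 2(τ + τ²)·[(vᵀX⁻¹v)(uᵀX⁻¹u) − (vᵀX⁻¹u)²]. -/

import Mathlib

open Matrix

lemma dp_symm {n : ℕ} {S : Matrix (Fin n) (Fin n) ℝ} (hS : S.IsHermitian)
    (u v : Fin n → ℝ) : v ⬝ᵥ S *ᵥ u = u ⬝ᵥ S *ᵥ v := by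
  have hsymm : Sᵀ = S := by
    rw [← conjTranspose_eq_transpose_of_trivial]; exact hS
  rw [dotProduct_mulVec, ← vecMul_transpose, hsymm, dotProduct_comm]

lemma cs_aux {n : ℕ} {S : Matrix (Fin n) (Fin n) ℝ} (hS : S.PosSemidef)
    (u v : Fin n → ℝ) : (v ⬝ᵥ S *ᵥ u) ^ 2 ≤ (v ⬝ᵥ S *ᵥ v) * (u ⬝ᵥ S *ᵥ u) := by
  set a := v ⬝ᵥ S *ᵥ v
  set b := u ⬝ᵥ S *ᵥ u
  set c := v ⬝ᵥ S *ᵥ u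
  have key : ∀ t : ℝ, 0 ≤ b * (t * t) + (2 * c) * t + a := by
    intro t
    have h0 := hS.dotProduct_mulVec_nonneg (v + t • u)
    simp only [star_trivial] at h0
    have hexp : (v + t • u) ⬝ᵥ S *ᵥ (v + t • u) = b * (t * t) + (2 * c) * t + a := by
      have hcu : u ⬝ᵥ S *ᵥ v = c := (dp_symm hS.1 v u)
      simp [mulVec_add, mulVec_smul, dotProduct_add, add_dotProduct, dotProduct_smul,
        smul_dotProduct, smul_eq_mul, hcu, a, b, c]
      ring
    linarith [hexp ▸ h0]
  have hd := discrim_le_zero key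
  rw [discrim] at hd
  nlinarith [hd]

lemma det2_mono (a b c a' b' c' : ℝ) (ha : 0 ≤ a) (hb : 0 ≤ b) (h : c ^ 2 ≤ a * b)
    (ha' : 0 ≤ a') (hb' : 0 ≤ b') (h' : c' ^ 2 ≤ a' * b') :
    a * b - c ^ 2 ≤ (a + a') * (b + b') - (c + c') ^ 2 := by
  nlinarith [sq_nonneg (a * b' - a' * b), mul_nonneg ha hb', mul_nonneg ha' hb,
    sq_nonneg (c * c'), mul_nonneg (mul_nonneg ha hb) (mul_nonneg ha' hb'),
    sq_nonneg (a * b' + a' * b - 2 * c * c'), sq_nonneg (c - c'), sq_nonneg (c + c')]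

set_option maxHeartbeats 1000000 in
/-- If `(1−τ)X⁻¹ ⪯ M ⪯ (1+τ)X⁻¹` with `τ ∈ [0,1)`, then for all `u, v`:
`|[(vᵀX⁻¹v)(uᵀX⁻¹u) − (vᵀX⁻¹u)²] − [(vᵀMv)(uᵀMu) − (vᵀMu)²]|
  ≤ 2(τ + τ²)[(vᵀX⁻¹v)(uᵀX⁻¹u) − (vᵀX⁻¹u)²]`. -/
theorem cross_approx (n : ℕ) (X M : Matrix (Fin n) (Fin n) ℝ)
    (hXsymm : X.IsSymm) (hX : X.PosDef) (hMsymm : M.IsSymm)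
    (τ : ℝ) (hτ0 : 0 ≤ τ) (hτ : τ < 1)
    (hlow : (M - (1 - τ) • X⁻¹).PosSemidef)
    (hup : ((1 + τ) • X⁻¹ - M).PosSemidef) :
    ∀ u v : Fin n → ℝ,
      |((v ⬝ᵥ X⁻¹.mulVec v) * (u ⬝ᵥ X⁻¹.mulVec u) - (v ⬝ᵥ X⁻¹.mulVec u) ^ 2) -
          ((v ⬝ᵥ M.mulVec v) * (u ⬝ᵥ M.mulVec u) - (v ⬝ᵥ M.mulVec u) ^ 2)| ≤
        2 * (τ + τ ^ 2) *
          ((v ⬝ᵥ X⁻¹.mulVec v) * (u ⬝ᵥ X⁻¹.mulVec u) - (v ⬝ᵥ X⁻¹.mulVec u) ^ 2) := by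
  intro u v
  have hApsd : (X⁻¹).PosSemidef := hX.posSemidef.inv
  -- scalar expansions
  have expand1 : ∀ w z : Fin n → ℝ,
      w ⬝ᵥ (M - (1 - τ) • X⁻¹) *ᵥ z = w ⬝ᵥ M *ᵥ z - (1 - τ) * (w ⬝ᵥ X⁻¹ *ᵥ z) := by
    intro w z
    simp [sub_mulVec, dotProduct_sub, smul_mulVec, dotProduct_smul, smul_eq_mul]
  have expand2 : ∀ w z : Fin n → ℝ,
      w ⬝ᵥ ((1 + τ) • X⁻¹ - M) *ᵥ z = (1 + τ) * (w ⬝ᵥ X⁻¹ *ᵥ z) - w ⬝ᵥ M *ᵥ z := by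
    intro w z
    simp [sub_mulVec, dotProduct_sub, smul_mulVec, dotProduct_smul, smul_eq_mul]
  set aA := v ⬝ᵥ X⁻¹ *ᵥ v with haA
  set bA := u ⬝ᵥ X⁻¹ *ᵥ u with hbA
  set cA := v ⬝ᵥ X⁻¹ *ᵥ u with hcA
  set aM := v ⬝ᵥ M *ᵥ v with haM
  set bM := u ⬝ᵥ M *ᵥ u with hbM
  set cM := v ⬝ᵥ M *ᵥ u with hcM
  -- nonnegativity / Cauchy–Schwarz for X⁻¹
  have haA0 : 0 ≤ aA := by simpa using hApsd.dotProduct_mulVec_nonneg v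
  have hbA0 : 0 ≤ bA := by simpa using hApsd.dotProduct_mulVec_nonneg u
  have hcsA : cA ^ 2 ≤ aA * bA := cs_aux hApsd u v
  -- S1 := M - (1-τ)•X⁻¹ scalars
  have ha1 : 0 ≤ aM - (1 - τ) * aA := by
    have := hlow.dotProduct_mulVec_nonneg v; rw [star_trivial, expand1] at this; linarith
  have hb1 : 0 ≤ bM - (1 - τ) * bA := by
    have := hlow.dotProduct_mulVec_nonneg u; rw [star_trivial, expand1] at this; linarith
  have hcs1 : (cM - (1 - τ) * cA) ^ 2 ≤ (aM - (1 - τ) * aA) * (bM - (1 - τ) * bA) := by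
    have := cs_aux hlow u v
    rw [expand1, expand1, expand1] at this
    exact this
  -- S2 := (1+τ)•X⁻¹ - M scalars
  have ha2 : 0 ≤ (1 + τ) * aA - aM := by
    have := hup.dotProduct_mulVec_nonneg v; rw [star_trivial, expand2] at this; linarith
  have hb2 : 0 ≤ (1 + τ) * bA - bM := by
    have := hup.dotProduct_mulVec_nonneg u; rw [star_trivial, expand2] at this; linarith
  have hcs2 : ((1 + τ) * cA - cM) ^ 2 ≤ ((1 + τ) * aA - aM) * ((1 + τ) * bA - bM) := by
    have := cs_aux hup u v
    rw [expand2, expand2, expand2] at this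
    exact this
  -- M is PSD
  have haM0 : 0 ≤ aM := by nlinarith
  have hbM0 : 0 ≤ bM := by nlinarith
  have hMpsd : M.PosSemidef := by
    refine PosSemidef.of_dotProduct_mulVec_nonneg ?_ fun x => ?_
    · rw [IsHermitian, conjTranspose_eq_transpose_of_trivial]; exact hMsymm
    · have h1 := hlow.dotProduct_mulVec_nonneg x
      rw [star_trivial, expand1] at h1
      have h2 := hApsd.dotProduct_mulVec_nonneg x
      rw [star_trivial] at h2
      rw [star_trivial]
      nlinarith
  have hcsM : cM ^ 2 ≤ aM * bM := cs_aux hMpsd u v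
  -- lower bound: (1-τ)² GA ≤ GM
  have hlower : (1 - τ) ^ 2 * (aA * bA - cA ^ 2) ≤ aM * bM - cM ^ 2 := by
    have hcsA' : ((1 - τ) * cA) ^ 2 ≤ (1 - τ) * aA * ((1 - τ) * bA) := by
      nlinarith [mul_le_mul_of_nonneg_left hcsA (sq_nonneg (1 - τ))]
    have h := det2_mono ((1 - τ) * aA) ((1 - τ) * bA) ((1 - τ) * cA)
      (aM - (1 - τ) * aA) (bM - (1 - τ) * bA) (cM - (1 - τ) * cA)
      (by nlinarith) (by nlinarith) hcsA' ha1 hb1 hcs1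
    ring_nf at h ⊢
    linarith [h]
  -- upper bound: GM ≤ (1+τ)² GA
  have hupper : aM * bM - cM ^ 2 ≤ (1 + τ) ^ 2 * (aA * bA - cA ^ 2) := by
    have h := det2_mono aM bM cM
      ((1 + τ) * aA - aM) ((1 + τ) * bA - bM) ((1 + τ) * cA - cM)
      haM0 hbM0 hcsM ha2 hb2 hcs2
    ring_nf at h ⊢
    linarith [h]
  have hGA0 : 0 ≤ aA * bA - cA ^ 2 := by linarith
  have hτ2GA : 0 ≤ τ ^ 2 * (aA * bA - cA ^ 2) := mul_nonneg (sq_nonneg τ) hGA0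
  have hτGA : 0 ≤ τ * (aA * bA - cA ^ 2) := mul_nonneg hτ0 hGA0
  rw [abs_le]
  refine ⟨?_, ?_⟩ <;> nlinarith [hτ2GA, hτGA, hlower, hupper]
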